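/- The linearization M can be written as M(X) = X - ∫ L X L*, where L(e^{jθ}) := Λ_∘^{1/2} G (Ψ^{1/2}/(G*Λ_∘G)) G*, and this L satisfies ∫ L* L = I. Consequently -M(X) = ∫ L X L* - (1/2)[X L*L + L*L X] integrated over the circle, a Lindblad-form generator. -/

import Mathlib

open Matrix MeasureTheory Real Filter
open scoped ComplexOrder

noncomputable section

abbrev Mat (n : ℕ) := Matrix (Fin n) (Fin n) ℂ
abbrev Vec (n : ℕ) := Matrix (Fin n) (Fin 1) ℂ

/-- the point e^{jθ} on the unit circle -/
def circPt (θ : ℝ) : ℂ := Complex.exp (θ * Complex.I)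

/-- G(e^{jθ}) = (e^{jθ} I - A)⁻¹ B -/
def Gm {n : ℕ} (A : Mat n) (B : Vec n) (θ : ℝ) : Vec n :=
  (circPt θ • (1 : Mat n) - A)⁻¹ * B

/-- the scalar G* Λ G at e^{jθ} -/
def quad {n : ℕ} (A : Mat n) (B : Vec n) (Λ : Mat n) (θ : ℝ) : ℂ :=
  ((Gm A B θ)ᴴ * Λ * Gm A B θ) 0 0

/-- normalized entrywise matrix integral over the unit circle -/
def mInt {n : ℕ} (f : ℝ → Mat n) : Mat n :=
  Matrix.of fun i j => (1 / (2 * π) : ℝ) • ∫ θ in (0:ℝ)..(2 * π), f θ i j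

/-- normalized scalar (complex) integral over the unit circle -/
def sInt (f : ℝ → ℂ) : ℂ := (1 / (2 * π) : ℝ) • ∫ θ in (0:ℝ)..(2 * π), f θ

/-- normalized scalar (real) integral over the unit circle -/
def sIntR (f : ℝ → ℝ) : ℝ := (1 / (2 * π)) * ∫ θ in (0:ℝ)..(2 * π), f θ

/-- all eigenvalues of A lie in the open unit disc -/
def IsStable {n : ℕ} (A : Mat n) : Prop := ∀ μ ∈ spectrum ℂ A, ‖μ‖ < 1

/-- (A,B) is a reachable pair: the controllability matrix has full rank -/
def Reachable {n : ℕ} (A : Mat n) (B : Vec n) : Prop :=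
  (Matrix.of fun (i : Fin n) (k : Fin n) => (A ^ (k : ℕ) * B) i 0).rank = n

open scoped Classical in
/-- positive semidefinite square root (junk value 0 off the psd cone) -/
def msqrt {n : ℕ} (M : Mat n) : Mat n :=
  if h : M.PosSemidef then (h.1.eigenvectorUnitary : Mat n) *
    diagonal (((↑) : ℝ → ℂ) ∘ (Real.sqrt ∘ h.1.eigenvalues)) *
    (star h.1.eigenvectorUnitary : Mat n) else 0

/-- the moment map ∫ G (Ψ/(G*ΛG)) G* -/
def moment {n : ℕ} (A : Mat n) (B : Vec n) (Ψ : ℝ → ℝ) (Λ : Mat n) : Mat n :=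
  mInt (fun θ => ((Ψ θ : ℂ) / quad A B Λ θ) • (Gm A B θ * (Gm A B θ)ᴴ))

/-- the iteration map Θ(Λ) = ∫ Λ^{1/2} G (Ψ/(G*ΛG)) G* Λ^{1/2} -/
def Theta {n : ℕ} (A : Mat n) (B : Vec n) (Ψ : ℝ → ℝ) (Λ : Mat n) : Mat n :=
  mInt (fun θ => ((Ψ θ : ℂ) / quad A B Λ θ) •
    (msqrt Λ * (Gm A B θ * (Gm A B θ)ᴴ) * msqrt Λ))

/-- the linearization M of Θ at Λ:
M(X) = X - Λ^{1/2} ∫ (GΨG*/(G*ΛG)) (G*XG/(G*ΛG)) Λ^{1/2} -/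
def Mlin {n : ℕ} (A : Mat n) (B : Vec n) (Ψ : ℝ → ℝ) (Λ : Mat n) (X : Mat n) : Mat n :=
  X - msqrt Λ * mInt (fun θ =>
    (((Ψ θ : ℂ) * (((Gm A B θ)ᴴ * X * Gm A B θ) 0 0)) / (quad A B Λ θ) ^ 2) •
      (Gm A B θ * (Gm A B θ)ᴴ)) * msqrt Λ

/-- the range of the operator Γ : Φ ↦ ∫ G Φ G* on continuous (2π-periodic) functions -/
def RangeGamma {n : ℕ} (A : Mat n) (B : Vec n) : Set (Mat n) :=
  {M | ∃ Φ : ℝ → ℝ, Continuous Φ ∧ (∀ θ, Φ (θ + 2 * π) = Φ θ) ∧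
    M = mInt (fun θ => (Φ θ : ℂ) • (Gm A B θ * (Gm A B θ)ᴴ))}

/-- The matrix-valued function L = Λ^{1/2} G (Ψ^{1/2}/(G*ΛG)) G*. -/
def Lmap {n : ℕ} (A : Mat n) (B : Vec n) (Ψ : ℝ → ℝ) (Λ : Mat n) (θ : ℝ) : Mat n :=
  ((Real.sqrt (Ψ θ) : ℂ) / quad A B Λ θ) • (msqrt Λ * (Gm A B θ * (Gm A B θ)ᴴ))


section Helpers

variable {n : ℕ}

lemma one_fin_one (M : Matrix (Fin 1) (Fin 1) ℂ) : M = M 0 0 • (1 : Matrix (Fin 1) (Fin 1) ℂ) := by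
  ext i j
  fin_cases i; fin_cases j
  simp

lemma mInt_congr {f g : ℝ → Mat n} (h : ∀ θ, f θ = g θ) : mInt f = mInt g := by
  have : f = g := funext h
  rw [this]

lemma cont_entry_integrable {f : ℝ → Mat n} (hf : Continuous f) (i j : Fin n) :
    IntervalIntegrable (fun θ => f θ i j) MeasureTheory.volume 0 (2 * π) :=
  (((continuous_apply j).comp ((continuous_apply i).comp hf))).intervalIntegrable _ _

lemma mInt_sub {f g : ℝ → Mat n}
    (hf : ∀ i j, IntervalIntegrable (fun θ => f θ i j) MeasureTheory.volume 0 (2 * π))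
    (hg : ∀ i j, IntervalIntegrable (fun θ => g θ i j) MeasureTheory.volume 0 (2 * π)) :
    mInt (fun θ => f θ - g θ) = mInt f - mInt g := by
  ext i j
  simp only [mInt, Matrix.of_apply, Matrix.sub_apply]
  rw [intervalIntegral.integral_sub (hf i j) (hg i j), smul_sub]

lemma mInt_smulR (r : ℝ) (f : ℝ → Mat n) :
    mInt (fun θ => r • f θ) = r • mInt f := by
  ext i j
  simp only [mInt, Matrix.of_apply, Matrix.smul_apply]
  rw [intervalIntegral.integral_smul, smul_comm]

set_option maxHeartbeats 1000000 in
lemma mInt_conj_mul (C D : Mat n) {f : ℝ → Mat n}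
    (hf : ∀ i j, IntervalIntegrable (fun θ => f θ i j) MeasureTheory.volume 0 (2 * π)) :
    mInt (fun θ => C * f θ * D) = C * mInt f * D := by
  ext i j
  simp only [mInt, Matrix.of_apply, Matrix.mul_apply]
  have hint : ∀ (k l : Fin n), IntervalIntegrable
      (fun θ => C i k * (f θ k l * D l j)) MeasureTheory.volume 0 (2 * π) :=
    fun k l => ((hf k l).mul_const _).const_mul _
  have h1 : ∀ θ : ℝ, (∑ l, (∑ k, C i k * f θ k l) * D l j)
      = ∑ l, ∑ k, C i k * (f θ k l * D l j) := by
    intro θ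
    refine Finset.sum_congr rfl fun l _ => ?_
    rw [Finset.sum_mul]
    refine Finset.sum_congr rfl fun k _ => ?_
    ring
  have e1 : (∫ θ in (0:ℝ)..(2 * π), ∑ l, (∑ k, C i k * f θ k l) * D l j)
      = ∫ θ in (0:ℝ)..(2 * π), ∑ l, ∑ k, C i k * (f θ k l * D l j) :=
    intervalIntegral.integral_congr (fun θ _ => h1 θ)
  have h2 : (∫ θ in (0:ℝ)..(2 * π), ∑ l, (∑ k, C i k * f θ k l) * D l j)
      = ∑ l, ∑ k, C i k * ((∫ θ in (0:ℝ)..(2 * π), f θ k l) * D l j) := by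
    have e2 : (∫ θ in (0:ℝ)..(2 * π), ∑ l, ∑ k, C i k * (f θ k l * D l j))
        = ∑ l, ∫ θ in (0:ℝ)..(2 * π), ∑ k, C i k * (f θ k l * D l j) :=
      intervalIntegral.integral_finset_sum
        (f := fun l θ => ∑ k, C i k * (f θ k l * D l j))
        (fun l _ => by
          have := IntervalIntegrable.sum (f := fun k θ => C i k * (f θ k l * D l j))
            Finset.univ (fun k _ => hint k l)
          rwa [show (∑ k : Fin n, fun θ => C i k * (f θ k l * D l j))
            = fun θ => ∑ k : Fin n, C i k * (f θ k l * D l j) by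
              funext θ; simp [Finset.sum_apply]] at this)
    have e3 : ∀ l : Fin n, (∫ θ in (0:ℝ)..(2 * π), ∑ k, C i k * (f θ k l * D l j))
        = ∑ k, ∫ θ in (0:ℝ)..(2 * π), C i k * (f θ k l * D l j) :=
      fun l => intervalIntegral.integral_finset_sum
        (f := fun k θ => C i k * (f θ k l * D l j)) (fun k _ => hint k l)
    rw [e1, e2]
    refine Finset.sum_congr rfl fun l _ => ?_
    rw [e3 l]
    refine Finset.sum_congr rfl fun k _ => ?_
    rw [intervalIntegral.integral_const_mul, intervalIntegral.integral_mul_const]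
  rw [h2, Finset.smul_sum]
  refine Finset.sum_congr rfl fun l _ => ?_
  rw [Finset.sum_mul, Finset.smul_sum]
  refine Finset.sum_congr rfl fun k _ => ?_
  simp only [smul_eq_mul, Complex.real_smul]
  ring

lemma mInt_add {f g : ℝ → Mat n}
    (hf : ∀ i j, IntervalIntegrable (fun θ => f θ i j) MeasureTheory.volume 0 (2 * π))
    (hg : ∀ i j, IntervalIntegrable (fun θ => g θ i j) MeasureTheory.volume 0 (2 * π)) :
    mInt (fun θ => f θ + g θ) = mInt f + mInt g := by
  ext i j
  simp only [mInt, Matrix.of_apply, Matrix.add_apply]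
  rw [intervalIntegral.integral_add (hf i j) (hg i j), smul_add]

end Helpers


section MainLemmas

variable {n : ℕ}

lemma quad_star {A : Mat n} {B : Vec n} {Λ : Mat n} (hΛ : Λ.IsHermitian) (θ : ℝ) :
    (starRingEnd ℂ) (quad A B Λ θ) = quad A B Λ θ := by
  have h : ((Gm A B θ)ᴴ * Λ * Gm A B θ)ᴴ = (Gm A B θ)ᴴ * Λ * Gm A B θ := by
    rw [Matrix.conjTranspose_mul, Matrix.conjTranspose_mul,
      Matrix.conjTranspose_conjTranspose, hΛ.eq, Matrix.mul_assoc]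
  have h2 := congrArg (fun M : Matrix (Fin 1) (Fin 1) ℂ => M 0 0) h
  simpa [Matrix.conjTranspose_apply, quad] using h2

lemma msqrt_herm {Λ : Mat n} (hΛ : Λ.PosDef) : (msqrt Λ)ᴴ = msqrt Λ := by
  rw [msqrt, dif_pos hΛ.posSemidef]
  have hD : (diagonal (((↑) : ℝ → ℂ) ∘ (Real.sqrt ∘ hΛ.posSemidef.1.eigenvalues)))ᴴ
      = diagonal (((↑) : ℝ → ℂ) ∘ (Real.sqrt ∘ hΛ.posSemidef.1.eigenvalues)) := by
    rw [diagonal_conjTranspose]; congr 1; funext i; simp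
  rw [conjTranspose_mul, conjTranspose_mul, hD, ← star_eq_conjTranspose,
    ← star_eq_conjTranspose, star_star, Matrix.mul_assoc]

lemma msqrt_sq {Λ : Mat n} (hΛ : Λ.PosDef) : msqrt Λ * msqrt Λ = Λ := by
  rw [msqrt, dif_pos hΛ.posSemidef]
  have hD : diagonal (((↑) : ℝ → ℂ) ∘ (Real.sqrt ∘ hΛ.posSemidef.1.eigenvalues)) *
      diagonal (((↑) : ℝ → ℂ) ∘ (Real.sqrt ∘ hΛ.posSemidef.1.eigenvalues))
      = diagonal (RCLike.ofReal ∘ hΛ.posSemidef.1.eigenvalues) := by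
    rw [diagonal_mul_diagonal]; congr 1; funext i
    simp only [Function.comp_apply]
    rw [← Complex.ofReal_mul, Real.mul_self_sqrt (hΛ.posSemidef.eigenvalues_nonneg i)]; rfl
  conv_rhs => rw [hΛ.posSemidef.1.spectral_theorem, Unitary.conjStarAlgAut_apply]
  simp only [Matrix.mul_assoc]
  rw [← Matrix.mul_assoc (star (hΛ.posSemidef.1.eigenvectorUnitary : Mat n) : Mat n)]
  rw [Unitary.star_mul_self_of_mem (SetLike.coe_mem _), Matrix.one_mul,
    ← Matrix.mul_assoc _ _ (star _), hD]

lemma det_ne {A : Mat n} (hA : IsStable A) (θ : ℝ) :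
    (circPt θ • (1 : Mat n) - A).det ≠ 0 := by
  intro h
  have hspec : circPt θ ∈ spectrum ℂ A := by
    rw [spectrum.mem_iff]
    intro hu
    rw [Algebra.algebraMap_eq_smul_one] at hu
    exact (isUnit_iff_ne_zero.mp ((Matrix.isUnit_iff_isUnit_det _).mp hu)) h
  have h1 := hA _ hspec
  have h2 : ‖circPt θ‖ = 1 := by
    simp [circPt, Complex.norm_exp_ofReal_mul_I]
  rw [h2] at h1
  exact absurd h1 (lt_irrefl 1)

lemma Gm_cont {A : Mat n} (hA : IsStable A) (B : Vec n) :
    Continuous fun θ => Gm A B θ := by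
  have hc : Continuous circPt := by
    unfold circPt
    exact Complex.continuous_exp.comp (Complex.continuous_ofReal.mul continuous_const)
  have hM : Continuous fun θ => circPt θ • (1 : Mat n) - A :=
    (hc.smul continuous_const).sub continuous_const
  have hinv : Continuous fun θ => (circPt θ • (1 : Mat n) - A)⁻¹ := by
    simp only [Matrix.inv_def, Ring.inverse_eq_inv']
    exact (hM.matrix_det.inv₀ (det_ne hA)).smul hM.matrix_adjugate
  exact hinv.matrix_mul continuous_const

lemma entry_cont {m k : ℕ} {f : ℝ → Matrix (Fin m) (Fin k) ℂ} (hf : Continuous f)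
    (i : Fin m) (j : Fin k) : Continuous fun θ => f θ i j :=
  (continuous_apply j).comp ((continuous_apply i).comp hf)

lemma quad_cont {A : Mat n} {B : Vec n} (hA : IsStable A) (Λ : Mat n) :
    Continuous (quad A B Λ) := by
  have h := ((Gm_cont hA B).matrix_conjTranspose.matrix_mul
    (continuous_const (y := Λ))).matrix_mul (Gm_cont hA B)
  exact entry_cont h 0 0

lemma key_e1 {A : Mat n} {B : Vec n} (Λ : Mat n) (X : Mat n) (θ : ℝ) :
    (Gm A B θ * (Gm A B θ)ᴴ) * X * (Gm A B θ * (Gm A B θ)ᴴ)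
      = (((Gm A B θ)ᴴ * X * Gm A B θ) 0 0) • (Gm A B θ * (Gm A B θ)ᴴ) := by
  set G := Gm A B θ
  have h0 : Gᴴ * X * G = ((Gᴴ * X * G) 0 0) • (1 : Matrix (Fin 1) (Fin 1) ℂ) :=
    one_fin_one _
  calc G * Gᴴ * X * (G * Gᴴ) = G * (Gᴴ * X * G) * Gᴴ := by
        simp only [Matrix.mul_assoc]
    _ = ((Gᴴ * X * G) 0 0) • (G * Gᴴ) := by
        conv_lhs => rw [h0]
        rw [Matrix.mul_smul, Matrix.mul_one, Matrix.smul_mul]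

lemma key_quad {A : Mat n} {B : Vec n} (Λ : Mat n) (θ : ℝ) :
    (Gm A B θ * (Gm A B θ)ᴴ) * Λ * (Gm A B θ * (Gm A B θ)ᴴ)
      = quad A B Λ θ • (Gm A B θ * (Gm A B θ)ᴴ) := key_e1 Λ Λ θ

/-- key pointwise identity 2 : L* L = (Ψ/q) • G G* -/
lemma key2 {A : Mat n} {B : Vec n} {Ψ : ℝ → ℝ} {Λ : Mat n}
    (hΛ : Λ.PosDef) (hΨpos : ∀ θ, 0 < Ψ θ)
    (hq0 : ∀ θ, quad A B Λ θ ≠ 0) (θ : ℝ) :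
    (Lmap A B Ψ Λ θ)ᴴ * Lmap A B Ψ Λ θ
      = ((Ψ θ : ℂ) / quad A B Λ θ) • (Gm A B θ * (Gm A B θ)ᴴ) := by
  have hqs := quad_star (A := A) (B := B) hΛ.1 θ
  set G := Gm A B θ with hG
  set q := quad A B Λ θ with hqdef
  set S := msqrt Λ with hSdef
  have hS : Sᴴ = S := msqrt_herm hΛ
  have hSS : S * S = Λ := msqrt_sq hΛ
  have hgH : (G * Gᴴ)ᴴ = G * Gᴴ := by
    rw [Matrix.conjTranspose_mul, Matrix.conjTranspose_conjTranspose]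
  set c : ℂ := (Real.sqrt (Ψ θ) : ℂ) / q with hc
  calc (Lmap A B Ψ Λ θ)ᴴ * Lmap A B Ψ Λ θ
      = ((starRingEnd ℂ) c • ((G * Gᴴ) * S)) * (c • (S * (G * Gᴴ))) := by
        rw [Lmap, Matrix.conjTranspose_smul, Matrix.conjTranspose_mul, hgH, hS]
        rfl
    _ = ((starRingEnd ℂ) c * c) • ((G * Gᴴ) * S * (S * (G * Gᴴ))) := by
        rw [Matrix.smul_mul, Matrix.mul_smul, smul_smul]
    _ = ((starRingEnd ℂ) c * c) • ((G * Gᴴ) * Λ * (G * Gᴴ)) := by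
        rw [Matrix.mul_assoc (G * Gᴴ) S, ← Matrix.mul_assoc S S, hSS,
          ← Matrix.mul_assoc]
    _ = ((starRingEnd ℂ) c * c * q) • (G * Gᴴ) := by
        rw [key_quad, smul_smul, ← hqdef, ← hG]
    _ = ((Ψ θ : ℂ) / q) • (G * Gᴴ) := by
        congr 1
        rw [hc, map_div₀, Complex.conj_ofReal, hqs]
        have hsq : (Real.sqrt (Ψ θ) : ℂ) * (Real.sqrt (Ψ θ) : ℂ) = (Ψ θ : ℂ) := by
          rw [← Complex.ofReal_mul, Real.mul_self_sqrt (hΨpos θ).le]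
        have hq' : q ≠ 0 := hq0 θ
        field_simp
        linear_combination hsq

/-- key pointwise identity 1 : L X L* = S F S -/
lemma key1 {A : Mat n} {B : Vec n} {Ψ : ℝ → ℝ} {Λ : Mat n}
    (hΛ : Λ.PosDef) (hΨpos : ∀ θ, 0 < Ψ θ)
    (hq0 : ∀ θ, quad A B Λ θ ≠ 0) (X : Mat n) (θ : ℝ) :
    Lmap A B Ψ Λ θ * X * (Lmap A B Ψ Λ θ)ᴴ
      = msqrt Λ * ((((Ψ θ : ℂ) * (((Gm A B θ)ᴴ * X * Gm A B θ) 0 0)) / (quad A B Λ θ) ^ 2) •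
          (Gm A B θ * (Gm A B θ)ᴴ)) * msqrt Λ := by
  have hqs := quad_star (A := A) (B := B) hΛ.1 θ
  set G := Gm A B θ with hG
  set q := quad A B Λ θ with hqdef
  set S := msqrt Λ with hSdef
  have hS : Sᴴ = S := msqrt_herm hΛ
  have hgH : (G * Gᴴ)ᴴ = G * Gᴴ := by
    rw [Matrix.conjTranspose_mul, Matrix.conjTranspose_conjTranspose]
  set c : ℂ := (Real.sqrt (Ψ θ) : ℂ) / q with hc
  set x : ℂ := (Gᴴ * X * G) 0 0 with hx
  calc Lmap A B Ψ Λ θ * X * (Lmap A B Ψ Λ θ)ᴴ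
      = (c • (S * (G * Gᴴ))) * X * ((starRingEnd ℂ) c • ((G * Gᴴ) * S)) := by
        rw [Lmap, Matrix.conjTranspose_smul, Matrix.conjTranspose_mul, hgH, hS]
        rfl
    _ = (c * (starRingEnd ℂ) c) • (S * ((G * Gᴴ) * X * (G * Gᴴ)) * S) := by
        rw [Matrix.smul_mul, Matrix.smul_mul, Matrix.mul_smul, smul_smul]
        congr 1
        simp only [Matrix.mul_assoc]
    _ = (c * (starRingEnd ℂ) c * x) • (S * (G * Gᴴ) * S) := by
        rw [key_e1 Λ X θ, ← hG, ← hx, Matrix.mul_smul, Matrix.smul_mul, smul_smul]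
    _ = S * ((((Ψ θ : ℂ) * x) / q ^ 2) • (G * Gᴴ)) * S := by
        rw [Matrix.mul_smul, Matrix.smul_mul]
        congr 1
        rw [hc, map_div₀, Complex.conj_ofReal, hqs]
        have hsq : (Real.sqrt (Ψ θ) : ℂ) * (Real.sqrt (Ψ θ) : ℂ) = (Ψ θ : ℂ) := by
          rw [← Complex.ofReal_mul, Real.mul_self_sqrt (hΨpos θ).le]
        have hq' : q ≠ 0 := hq0 θ
        field_simp
        linear_combination x * hsq

end MainLemmas

/-- M(X) = X - ∫ L X L*, with ∫ L*L = I, so that -M is a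
Lindblad-form generator. -/
theorem stmt15 {n : ℕ} (A : Mat n) (B : Vec n) (Ψ : ℝ → ℝ) (Λ : Mat n)
    (hA : IsStable A) (hR : Reachable A B)
    (hΨc : Continuous Ψ) (hΨpos : ∀ θ, 0 < Ψ θ)
    (hΛ : Λ.PosDef)
    (hq : ∀ θ, 0 < (quad A B Λ θ).re)
    (hmom : moment A B Ψ Λ = 1) :
    (∀ X : Mat n, X.IsHermitian →
      Mlin A B Ψ Λ X =
        X - mInt (fun θ => Lmap A B Ψ Λ θ * X * (Lmap A B Ψ Λ θ)ᴴ)) ∧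
    mInt (fun θ => (Lmap A B Ψ Λ θ)ᴴ * Lmap A B Ψ Λ θ) = 1 ∧
    (∀ X : Mat n, X.IsHermitian →
      -Mlin A B Ψ Λ X =
        mInt (fun θ => Lmap A B Ψ Λ θ * X * (Lmap A B Ψ Λ θ)ᴴ
          - ((1 : ℝ) / 2) • (X * ((Lmap A B Ψ Λ θ)ᴴ * Lmap A B Ψ Λ θ)
            + ((Lmap A B Ψ Λ θ)ᴴ * Lmap A B Ψ Λ θ) * X))) := by

  have hq0 : ∀ θ, quad A B Λ θ ≠ 0 := by
    intro θ h
    have h2 := hq θ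
    rw [h] at h2
    simp at h2
  have hGc : Continuous fun θ => Gm A B θ := Gm_cont hA B
  have hgc : Continuous fun θ => Gm A B θ * (Gm A B θ)ᴴ :=
    hGc.matrix_mul hGc.matrix_conjTranspose
  have hqc : Continuous (quad A B Λ) := quad_cont hA Λ
  have hcf : Continuous fun θ => ((Real.sqrt (Ψ θ) : ℂ) / quad A B Λ θ) :=
    (Complex.continuous_ofReal.comp (Real.continuous_sqrt.comp hΨc)).div hqc hq0
  have hLc : Continuous fun θ => Lmap A B Ψ Λ θ := by
    unfold Lmap
    exact hcf.smul (continuous_const.matrix_mul hgc)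
  have hPc : ∀ X : Mat n, Continuous fun θ =>
      Lmap A B Ψ Λ θ * X * (Lmap A B Ψ Λ θ)ᴴ :=
    fun X => (hLc.matrix_mul continuous_const).matrix_mul hLc.matrix_conjTranspose
  have huc : Continuous fun θ => (Lmap A B Ψ Λ θ)ᴴ * Lmap A B Ψ Λ θ :=
    hLc.matrix_conjTranspose.matrix_mul hLc
  have hFc : ∀ X : Mat n, Continuous fun θ =>
      (((Ψ θ : ℂ) * (((Gm A B θ)ᴴ * X * Gm A B θ) 0 0)) / (quad A B Λ θ) ^ 2) •
        (Gm A B θ * (Gm A B θ)ᴴ) := by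
    intro X
    have hx : Continuous fun θ => ((Gm A B θ)ᴴ * X * Gm A B θ) 0 0 :=
      entry_cont ((hGc.matrix_conjTranspose.matrix_mul
        (continuous_const (y := X))).matrix_mul hGc) 0 0
    exact (((Complex.continuous_ofReal.comp hΨc).mul hx).div (hqc.pow 2)
      (fun θ => pow_ne_zero 2 (hq0 θ))).smul hgc
  have part1 : ∀ X : Mat n, Mlin A B Ψ Λ X
      = X - mInt (fun θ => Lmap A B Ψ Λ θ * X * (Lmap A B Ψ Λ θ)ᴴ) := by
    intro X
    rw [Mlin]
    congr 1
    rw [← mInt_conj_mul (msqrt Λ) (msqrt Λ)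
      (fun i j => cont_entry_integrable (hFc X) i j)]
    exact (mInt_congr (fun θ => key1 hΛ hΨpos hq0 X θ)).symm
  have part2 : mInt (fun θ => (Lmap A B Ψ Λ θ)ᴴ * Lmap A B Ψ Λ θ) = 1 := by
    rw [mInt_congr (fun θ => key2 hΛ hΨpos hq0 θ)]
    exact hmom
  refine ⟨fun X _ => part1 X, part2, fun X hX => ?_⟩
  rw [part1 X, neg_sub]
  have hQc : Continuous fun θ =>
      ((1 : ℝ) / 2) • (X * ((Lmap A B Ψ Λ θ)ᴴ * Lmap A B Ψ Λ θ)
        + ((Lmap A B Ψ Λ θ)ᴴ * Lmap A B Ψ Λ θ) * X) :=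
    (continuous_const (y := ((1 : ℝ) / 2))).smul (((continuous_const (y := X)).matrix_mul huc).add
      (huc.matrix_mul (continuous_const (y := X))))
  rw [mInt_sub (fun i j => cont_entry_integrable (hPc X) i j)
      (fun i j => cont_entry_integrable hQc i j)]
  congr 1
  have c1 : mInt (fun θ => X * ((Lmap A B Ψ Λ θ)ᴴ * Lmap A B Ψ Λ θ)) = X := by
    calc mInt (fun θ => X * ((Lmap A B Ψ Λ θ)ᴴ * Lmap A B Ψ Λ θ))
        = mInt (fun θ => X * ((Lmap A B Ψ Λ θ)ᴴ * Lmap A B Ψ Λ θ) * 1) :=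
          mInt_congr (fun θ => (mul_one _).symm)
      _ = X * mInt (fun θ => (Lmap A B Ψ Λ θ)ᴴ * Lmap A B Ψ Λ θ) * 1 :=
          mInt_conj_mul X 1 (fun i j => cont_entry_integrable huc i j)
      _ = X := by rw [part2]; simp
  have c2 : mInt (fun θ => ((Lmap A B Ψ Λ θ)ᴴ * Lmap A B Ψ Λ θ) * X) = X := by
    calc mInt (fun θ => ((Lmap A B Ψ Λ θ)ᴴ * Lmap A B Ψ Λ θ) * X)
        = mInt (fun θ => 1 * ((Lmap A B Ψ Λ θ)ᴴ * Lmap A B Ψ Λ θ) * X) :=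
          mInt_congr (fun θ => by rw [one_mul])
      _ = 1 * mInt (fun θ => (Lmap A B Ψ Λ θ)ᴴ * Lmap A B Ψ Λ θ) * X :=
          mInt_conj_mul 1 X (fun i j => cont_entry_integrable huc i j)
      _ = X := by rw [part2]; simp
  rw [mInt_smulR,
    mInt_add (fun i j => cont_entry_integrable (continuous_const.matrix_mul huc) i j)
      (fun i j => cont_entry_integrable (huc.matrix_mul continuous_const) i j),
    c1, c2, ← two_smul ℝ X, smul_smul]
  norm_num
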